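/- Let R be a commutative unital ring and equip the R-module R² with the R-bilinear commutative product given by (a₁,a₂)(b₁,b₂) = (a₂b₂, 0); with e₁ = (1,0), e₂ = (0,1) this is the R-algebra (A₆)_R, satisfying e₁² = 0, e₂² = e₁, e₁e₂ = 0. An R-linear map f : R² → R² is a bijective algebra homomorphism (an R-algebra automorphism of (A₆)_R) if and only if there exist c ∈ R and a unit d ∈ R^× such that f(e₁) = d²e₁ and f(e₂) = ce₁ + de₂. -/

import Mathlib

/-- The product of the scalar extension `(A₆)_R` realized on `R × R`:
with `e₁ = (1,0)`, `e₂ = (0,1)` one has `e₁² = 0`, `e₂² = e₁`, `e₁e₂ = e₂e₁ = 0`. -/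
def a6mul {R : Type*} [CommRing R] (u v : R × R) : R × R := (u.2 * v.2, 0)

lemma lin_eval {R : Type*} [CommRing R] (f : (R × R) →ₗ[R] (R × R)) (x y : R) :
    f (x, y) = x • f (1, 0) + y • f (0, 1) := by
  rw [← map_smul, ← map_smul, ← map_add]
  congr 1
  simp [Prod.ext_iff]

/-- An `R`-linear map `f : R² → R²` is an `R`-algebra automorphism of
`(A₆)_R` if and only if there exist `c ∈ R` and a unit `d ∈ R^×` with `f(e₁) = d²e₁`
and `f(e₂) = ce₁ + de₂`. -/
theorem stmt14 (R : Type*) [CommRing R] (f : (R × R) →ₗ[R] (R × R)) :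
    (Function.Bijective f ∧ ∀ u v : R × R, f (a6mul u v) = a6mul (f u) (f v)) ↔
    ∃ c d : R, IsUnit d ∧ f (1, 0) = (d ^ 2, 0) ∧ f (0, 1) = (c, d) := by
  constructor
  · rintro ⟨hbij, hmul⟩
    set c := (f (0, 1)).1 with hc
    set d := (f (0, 1)).2 with hd
    have hfe2 : f (0, 1) = (c, d) := rfl
    have he1 : f (1, 0) = (d ^ 2, 0) := by
      have := hmul (0, 1) (0, 1)
      simp only [a6mul, hfe2] at this
      simpa [sq] using this
    refine ⟨c, d, ?_, he1, hfe2⟩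
    obtain ⟨⟨x, y⟩, hxy⟩ := hbij.2 (0, 1)
    rw [lin_eval, he1, hfe2] at hxy
    have h2 : y * d = 1 := by
      have := congrArg Prod.snd hxy
      simpa using this
    exact IsUnit.of_mul_eq_one (a := d) y (by rw [mul_comm]; exact h2)
  · rintro ⟨c, d, hd, he1, he2⟩
    obtain ⟨u, hu⟩ := hd
    set e : R := (↑u⁻¹ : R) with he
    have hinv : e * d = 1 := by rw [he, ← hu]; exact u.inv_mul
    have hf : ∀ x y : R, f (x, y) = (d ^ 2 * x + c * y, d * y) := by
      intro x y
      rw [lin_eval, he1, he2]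
      simp only [Prod.smul_mk, smul_eq_mul, Prod.mk_add_mk, Prod.mk.injEq]
      constructor <;> ring
    constructor
    · apply Function.bijective_iff_has_inverse.mpr
      refine ⟨fun p => (e ^ 2 * (p.1 - c * (e * p.2)), e * p.2), ?_, ?_⟩
      · rintro ⟨x, y⟩
        rw [hf]
        simp only [Prod.mk.injEq]
        constructor
        · linear_combination (x * (e * d + 1) - c * e ^ 2 * y) * hinv
        · linear_combination y * hinv
      · rintro ⟨p, q⟩
        rw [hf]
        simp only [Prod.mk.injEq]
        constructor
        · linear_combination (p - c * e * q) * (d * e + 1) * hinv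
        · linear_combination q * hinv
    · rintro ⟨u1, u2⟩ ⟨v1, v2⟩
      simp only [a6mul]
      rw [hf, hf, hf]
      simp only [Prod.mk.injEq]
      constructor <;> ring
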